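/- (Heavy-string mismatch bound, Lemma 3.4.) Let X be a weighted string of length n over a finite alphabet Σ, let H_X be a heavy string of X, and let 1/z ∈ (0,1] be a weight threshold. If U is a z-solid factor of X starting at position i and ending at position j (i.e., P(X[i..j] = U) ≥ 1/z), then d_H(U, H_X[i..j]) ≤ log₂ z. -/
import Mathlib


/-- Heavy-string mismatch bound, Lemma 3.4: if `U` is a `z`-solid
factor of the weighted string `X` at position `i` (0-indexed, of length `m` with
`i + m ≤ n`), i.e. its occurrence probability is at least `1/z`, then the Hamming
distance between `U` and the corresponding fragment of the heavy string `H` is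
at most `log₂ z`. -/
theorem hammingDist_le_logb_of_solid {A : Type*} [Fintype A] [DecidableEq A]
    (n : ℕ) (X : ℕ → A → ℝ)
    (hX0 : ∀ i < n, ∀ a, 0 ≤ X i a)
    (hX1 : ∀ i < n, ∑ a, X i a = 1)
    (H : ℕ → A) (hH : ∀ i < n, ∀ a, X i a ≤ X i (H i))
    (z : ℝ) (hz : 1 ≤ z)
    (i m : ℕ) (him : i + m ≤ n) (U : Fin m → A)
    (hsolid : 1 / z ≤ ∏ h : Fin m, X (i + h.val) (U h)) :
    (hammingDist U (fun h : Fin m => H (i + h.val)) : ℝ) ≤ Real.logb 2 z := by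
  have hlt : ∀ h : Fin m, i + h.val < n := fun h => lt_of_lt_of_le (by omega) him
  -- each factor is nonneg and ≤ 1
  have h0 : ∀ h : Fin m, 0 ≤ X (i + h.val) (U h) := fun h => hX0 _ (hlt h) _
  have h1 : ∀ h : Fin m, X (i + h.val) (U h) ≤ 1 := by
    intro h
    have := Finset.single_le_sum (f := fun a => X (i + h.val) a)
      (fun a _ => hX0 _ (hlt h) a) (Finset.mem_univ (U h))
    linarith [hX1 _ (hlt h)]
  set S : Finset (Fin m) :=
    Finset.univ.filter (fun h : Fin m => U h ≠ H (i + h.val)) with hS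
  have hcard : hammingDist U (fun h : Fin m => H (i + h.val)) = S.card := rfl
  -- at mismatch positions, probability ≤ 1/2
  have hhalf : ∀ h ∈ S, X (i + h.val) (U h) ≤ 1 / 2 := by
    intro h hh
    have hne : U h ≠ H (i + h.val) := by
      simpa [hS] using hh
    have hsum : X (i + h.val) (U h) + X (i + h.val) (H (i + h.val)) ≤ 1 := by
      have := Finset.sum_le_sum_of_subset_of_nonneg
        (s := ({U h, H (i + h.val)} : Finset A)) (t := Finset.univ)
        (Finset.subset_univ _) (fun a _ _ => hX0 _ (hlt h) a)
      rw [Finset.sum_pair hne] at this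
      linarith [hX1 _ (hlt h)]
    have := hH _ (hlt h) (U h)
    linarith
  -- product over all ≤ product over S
  have hprodS : (∏ h : Fin m, X (i + h.val) (U h)) ≤ ∏ h ∈ S, X (i + h.val) (U h) := by
    rw [← Finset.prod_filter_mul_prod_filter_not Finset.univ
      (fun h : Fin m => U h ≠ H (i + h.val)), ← hS]
    have hle1 : (∏ h ∈ Finset.univ.filter
        (fun h : Fin m => ¬ U h ≠ H (i + h.val)), X (i + h.val) (U h)) ≤ 1 :=
      Finset.prod_le_one (fun h _ => h0 h) (fun h _ => h1 h)
    have hpos : 0 ≤ ∏ h ∈ S, X (i + h.val) (U h) :=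
      Finset.prod_nonneg (fun h _ => h0 h)
    nlinarith [Finset.prod_nonneg (s := Finset.univ.filter
      (fun h : Fin m => ¬ U h ≠ H (i + h.val)))
      (fun h _ => h0 h : ∀ h ∈ Finset.univ.filter
        (fun h : Fin m => ¬ U h ≠ H (i + h.val)), 0 ≤ X (i + h.val) (U h))]
  have hhalfpow : (∏ h ∈ S, X (i + h.val) (U h)) ≤ (1 / 2 : ℝ) ^ S.card := by
    rw [← Finset.prod_const]
    exact Finset.prod_le_prod (fun h _ => h0 h) hhalf
  have hz0 : (0:ℝ) < z := lt_of_lt_of_le one_pos hz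
  have key : (2:ℝ) ^ S.card ≤ z := by
    have h1z : 1 / z ≤ (1 / 2 : ℝ) ^ S.card := le_trans hsolid (le_trans hprodS hhalfpow)
    rw [one_div, div_pow, one_pow, one_div] at h1z
    have h2 : (0:ℝ) < 2 ^ S.card := by positivity
    exact (inv_le_inv₀ hz0 h2).mp h1z
  rw [hcard]
  calc (S.card : ℝ) = Real.logb 2 ((2:ℝ) ^ S.card) := by
        rw [Real.logb_pow, Real.logb_self_eq_one (by norm_num)]; ring
    _ ≤ Real.logb 2 z := by
        exact (Real.logb_le_logb (by norm_num) (by positivity) hz0).mpr key
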